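/- Let each state s ∈ S be represented by a vector in ℝ^d with ‖s‖ ≤ 1, let r : S → ℝ satisfy |r(s)| ≤ r_max, and suppose θ* ∈ (ℝ^d)^m satisfies the Bellman equation V(s,θ*) = r(s) + γ Σ_{s''} P(s,s'') V(s'',θ*) for every s, where V is the one-hidden-layer network. Let J(θ*) be the Jacobian of θ ↦ (V(s,θ))_{s∈S} at θ* and σ* = σ_min^{2,D}(J(θ*)) = inf_{x≠0} ‖J(θ*)x‖_D/‖x‖. For θ ∈ (ℝ^d)^m, step-size α > 0, and states s, s', define the TD update θ⁺(s,s') = θ + α ∇_θ V(s,θ) (r(s) + γ V(s',θ) − V(s,θ)). Then the expected squared distance to θ* after one step, Σ_s μ(s) Σ_{s'} P(s,s') ‖θ⁺(s,s') − θ*‖², is at most (1 − 2α(1−γ)σ*² + 3α²(1+γ²)l⁴) ‖θ − θ*‖² + 4α(1+γ) c0 l m^{−1/2} ‖θ − θ*‖³ + 12 α² γ² l² r_max² / (1−γ)². -/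

import Mathlib

open Filter Set Topology RealInnerProductSpace

section AuxLemmas

lemma aux_deriv_bound (σ : ℝ → ℝ) (l : ℝ) (hσdiff : Differentiable ℝ σ)
    (hσlip : ∀ u v, |σ u - σ v| ≤ l * |u - v|) (u : ℝ) : |deriv σ u| ≤ l := by
  have h := hasDerivAt_iff_tendsto_slope.mp (hσdiff u).hasDerivAt
  have h2 : Tendsto (fun v => |slope σ u v|) (𝓝[≠] u) (𝓝 |deriv σ u|) :=
    (continuous_abs.tendsto _).comp h
  refine le_of_tendsto h2 ?_
  filter_upwards [self_mem_nhdsWithin] with v hv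
  have hvne : v ≠ u := hv
  have hpos : 0 < |v - u| := abs_pos.mpr (sub_ne_zero.mpr hvne)
  rw [slope_def_field, abs_div]
  rw [div_le_iff₀ hpos]
  simpa [abs_sub_comm] using hσlip v u

lemma aux_taylor (σ : ℝ → ℝ) (c0 : ℝ) (hσdiff : Differentiable ℝ σ)
    (hσsmooth : ∀ u v, |deriv σ u - deriv σ v| ≤ c0 * |u - v|) (a v : ℝ) :
    |σ (a + v) - σ a - deriv σ a * v| ≤ c0 / 2 * v ^ 2 := by
  have hc0 : 0 ≤ c0 := le_trans (abs_nonneg _) (by simpa using hσsmooth 1 0)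
  have hcont : Continuous (deriv σ) := by
    refine (LipschitzWith.of_dist_le_mul (K := ⟨c0, hc0⟩) ?_).continuous
    intro u w
    rw [Real.dist_eq, Real.dist_eq]; exact hσsmooth u w
  have key : ∀ t : ℝ, HasDerivAt (fun t : ℝ => σ (a + t * v) - t * (deriv σ a * v))
      (deriv σ (a + t * v) * v - deriv σ a * v) t := by
    intro t
    have h1 : HasDerivAt (fun t : ℝ => a + t * v) v t := by
      simpa using ((hasDerivAt_id t).mul_const v).const_add a
    have h2 : HasDerivAt (fun t : ℝ => σ (a + t * v)) (deriv σ (a + t * v) * v) t :=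
      ((hσdiff _).hasDerivAt.comp t h1)
    exact h2.sub (hasDerivAt_mul_const (deriv σ a * v))
  have hcont' : Continuous fun t : ℝ => deriv σ (a + t * v) * v - deriv σ a * v := by
    fun_prop
  have hint : IntervalIntegrable (fun t : ℝ => deriv σ (a + t * v) * v - deriv σ a * v)
      MeasureTheory.volume 0 1 := hcont'.intervalIntegrable 0 1
  have hFTC := intervalIntegral.integral_eq_sub_of_hasDerivAt
      (f := fun t : ℝ => σ (a + t * v) - t * (deriv σ a * v))
      (f' := fun t : ℝ => deriv σ (a + t * v) * v - deriv σ a * v)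
      (fun t _ => key t) hint
  have heq : σ (a + v) - σ a - deriv σ a * v
      = ∫ t in (0:ℝ)..1, (deriv σ (a + t * v) * v - deriv σ a * v) := by
    rw [hFTC]; ring_nf
  rw [heq]
  calc |∫ t in (0:ℝ)..1, (deriv σ (a + t * v) * v - deriv σ a * v)|
      ≤ ∫ t in (0:ℝ)..1, |deriv σ (a + t * v) * v - deriv σ a * v| :=
        intervalIntegral.abs_integral_le_integral_abs zero_le_one
    _ ≤ ∫ t in (0:ℝ)..1, c0 * v ^ 2 * t := by
        refine intervalIntegral.integral_mono_on zero_le_one (hcont'.abs.intervalIntegrable 0 1)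
          ((continuous_const.mul continuous_id).intervalIntegrable 0 1) ?_
        intro t ht
        have := hσsmooth (a + t * v) a
        have h3 : |deriv σ (a + t * v) - deriv σ a| ≤ c0 * (t * |v|) := by
          have h4 : |deriv σ (a + t * v) - deriv σ a| ≤ c0 * |t * v| := by
            simpa [add_sub_cancel_left] using this
          calc |deriv σ (a + t * v) - deriv σ a| ≤ c0 * |t * v| := h4
            _ = c0 * (t * |v|) := by rw [abs_mul, abs_of_nonneg ht.1]
        calc |deriv σ (a + t * v) * v - deriv σ a * v|
            = |deriv σ (a + t * v) - deriv σ a| * |v| := by rw [← abs_mul]; ring_nf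
          _ ≤ c0 * (t * |v|) * |v| := by
              exact mul_le_mul_of_nonneg_right h3 (abs_nonneg v)
          _ = c0 * v ^ 2 * t := by rw [sq_abs v |>.symm, sq]; ring
    _ = c0 / 2 * v ^ 2 := by
        rw [intervalIntegral.integral_const_mul, integral_id]; ring

lemma aux_hasfderiv {S : Type*} [Fintype S] {d m : ℕ}
    (σ : ℝ → ℝ) (hσdiff : Differentiable ℝ σ)
    (b : Fin m → ℝ) (emb : S → EuclideanSpace ℝ (Fin d))
    (V : EuclideanSpace ℝ (Fin m × Fin d) → EuclideanSpace ℝ S)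
    (hV : ∀ θ s, V θ s = (1 / Real.sqrt m) * ∑ r, b r * σ (∑ j, θ (r, j) * emb s j))
    (gradV : EuclideanSpace ℝ (Fin m × Fin d) → S → EuclideanSpace ℝ (Fin m × Fin d))
    (hgradV : ∀ θ s (r : Fin m) (j : Fin d),
      gradV θ s (r, j)
        = (1 / Real.sqrt m) * b r * deriv σ (∑ j', θ (r, j') * emb s j') * emb s j)
    (θstar : EuclideanSpace ℝ (Fin m × Fin d)) :
    HasFDerivAt V
      ((PiLp.continuousLinearEquiv 2 ℝ (fun _ : S => ℝ)).symm.toContinuousLinearMap.comp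
        (ContinuousLinearMap.pi fun s => innerSL ℝ (gradV θstar s))) θstar := by
  classical
  have coord : ∀ s : S, HasFDerivAt (fun θ : EuclideanSpace ℝ (Fin m × Fin d) => V θ s)
      (innerSL ℝ (gradV θstar s)) θstar := by
    intro s
    set ℓ : Fin m → (EuclideanSpace ℝ (Fin m × Fin d) →L[ℝ] ℝ) :=
      fun r => ∑ j, emb s j • EuclideanSpace.proj ((r, j) : Fin m × Fin d) with hℓdef
    have hℓ : ∀ (r) (θ : EuclideanSpace ℝ (Fin m × Fin d)), ℓ r θ = ∑ j, θ (r, j) * emb s j := by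
      intro r θ
      simp [hℓdef, ContinuousLinearMap.sum_apply, PiLp.proj_apply, mul_comm]
    have hcoords : HasFDerivAt
        (fun θ : EuclideanSpace ℝ (Fin m × Fin d) => (1 / Real.sqrt m) * ∑ r, b r * σ (ℓ r θ))
        ((1 / Real.sqrt m : ℝ) • ∑ r, (b r) • ((deriv σ (ℓ r θstar)) • ℓ r)) θstar := by
      refine HasFDerivAt.const_mul ?_ _
      refine HasFDerivAt.fun_sum fun r _ => ?_
      exact ((hσdiff (ℓ r θstar)).hasDerivAt.comp_hasFDerivAt θstar (ℓ r).hasFDerivAt).const_mul _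
    have hfun : (fun θ : EuclideanSpace ℝ (Fin m × Fin d) => V θ s)
        = fun θ : EuclideanSpace ℝ (Fin m × Fin d) => (1 / Real.sqrt m) * ∑ r, b r * σ (ℓ r θ) := by
      funext θ
      rw [hV θ s]
      congr 1
      refine Finset.sum_congr rfl fun r _ => ?_
      rw [hℓ]
    rw [hfun]
    refine hcoords.congr_fderiv ?_
    symm
    apply ContinuousLinearMap.ext
    intro x
    simp only [ContinuousLinearMap.smul_apply, ContinuousLinearMap.sum_apply, innerSL_apply_apply,
      smul_eq_mul]
    have hip : (inner ℝ (gradV θstar s) x : ℝ) = ∑ i, gradV θstar s i * x i := by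
      simp [PiLp.inner_apply, RCLike.inner_apply, mul_comm]
    rw [hip, Fintype.sum_prod_type, Finset.mul_sum]
    refine Finset.sum_congr rfl fun r _ => ?_
    simp only [hℓ, Finset.mul_sum]
    refine Finset.sum_congr rfl fun j _ => ?_
    rw [hgradV]
    ring
  have hpi : HasFDerivAt (fun (θ : EuclideanSpace ℝ (Fin m × Fin d)) (s : S) => V θ s)
      (ContinuousLinearMap.pi fun s => innerSL ℝ (gradV θstar s)) θstar :=
    hasFDerivAt_pi.mpr coord
  have hcomp := ((PiLp.continuousLinearEquiv 2 ℝ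
      (fun _ : S => ℝ)).symm.toContinuousLinearMap.hasFDerivAt).comp θstar hpi
  exact hcomp

end AuxLemmas

set_option maxHeartbeats 8000000

theorem stmt19 {S : Type*} [Fintype S] {d m : ℕ} (hm : 1 ≤ m)
    (P : S → S → ℝ) (μ : S → ℝ) (γ l c0 α rmax : ℝ)
    (hPnonneg : ∀ s s', 0 ≤ P s s') (hProw : ∀ s, ∑ s', P s s' = 1)
    (hμnonneg : ∀ s, 0 ≤ μ s) (hμsum : ∑ s, μ s = 1)
    (hstat : ∀ s', ∑ s, μ s * P s s' = μ s')
    (hγ : γ ∈ Set.Ioo (0 : ℝ) 1) (hα : 0 < α) (hrmax : 0 ≤ rmax)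
    (σ : ℝ → ℝ) (hσdiff : Differentiable ℝ σ)
    (hσlip : ∀ u v, |σ u - σ v| ≤ l * |u - v|)
    (hσsmooth : ∀ u v, |deriv σ u - deriv σ v| ≤ c0 * |u - v|)
    (b : Fin m → ℝ) (hb : ∀ r, |b r| ≤ 1)
    (emb : S → EuclideanSpace ℝ (Fin d)) (hemb : ∀ s, ‖emb s‖ ≤ 1)
    (rew : S → ℝ) (hrew : ∀ s, |rew s| ≤ rmax)
    (V : EuclideanSpace ℝ (Fin m × Fin d) → EuclideanSpace ℝ S)
    (hV : ∀ θ s, V θ s = (1 / Real.sqrt m) * ∑ r, b r * σ (∑ j, θ (r, j) * emb s j))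
    (gradV : EuclideanSpace ℝ (Fin m × Fin d) → S → EuclideanSpace ℝ (Fin m × Fin d))
    (hgradV : ∀ θ s (r : Fin m) (j : Fin d),
      gradV θ s (r, j)
        = (1 / Real.sqrt m) * b r * deriv σ (∑ j', θ (r, j') * emb s j') * emb s j)
    (θstar : EuclideanSpace ℝ (Fin m × Fin d))
    (hbellman : ∀ s, V θstar s = rew s + γ * ∑ s'', P s s'' * V θstar s'')
    (θ : EuclideanSpace ℝ (Fin m × Fin d)) :
    ∑ s, μ s * ∑ s', P s s' *
        ‖θ + (α * (rew s + γ * V θ s' - V θ s)) • gradV θ s - θstar‖ ^ 2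
      ≤ (1 - 2 * α * (1 - γ) *
            (⨅ x : {x : EuclideanSpace ℝ (Fin m × Fin d) // x ≠ 0},
              Real.sqrt (∑ s, μ s * (fderiv ℝ V θstar x.1 s) ^ 2) / ‖x.1‖) ^ 2
          + 3 * α ^ 2 * (1 + γ ^ 2) * l ^ 4) * ‖θ - θstar‖ ^ 2
        + 4 * α * (1 + γ) * c0 * l * (Real.sqrt m)⁻¹ * ‖θ - θstar‖ ^ 3
        + 12 * α ^ 2 * γ ^ 2 * l ^ 2 * rmax ^ 2 / (1 - γ) ^ 2 := by
  classical
  obtain ⟨hγ0, hγ1⟩ := hγ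
  have hγ' : (0:ℝ) < 1 - γ := by linarith
  have hl : 0 ≤ l := le_trans (abs_nonneg _) (by simpa using hσlip 1 0)
  have hc0 : 0 ≤ c0 := le_trans (abs_nonneg _) (by simpa using hσsmooth 1 0)
  have hmR : (0:ℝ) < (m:ℝ) := by exact_mod_cast Nat.lt_of_lt_of_le Nat.zero_lt_one hm
  have hmpos : (0:ℝ) < Real.sqrt m := Real.sqrt_pos.mpr hmR
  have hdb : ∀ u, |deriv σ u| ≤ l := aux_deriv_bound σ l hσdiff hσlip
  have htay : ∀ a v, |σ (a + v) - σ a - deriv σ a * v| ≤ c0 / 2 * v ^ 2 :=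
    aux_taylor σ c0 hσdiff hσsmooth
  set κ : ℝ := c0 / (2 * Real.sqrt m) with hκdef
  have hκ : 0 ≤ κ := by positivity
  set n : ℝ := ‖θ - θstar‖ with hndef
  have hn0 : 0 ≤ n := norm_nonneg _
  set σs : ℝ := ⨅ x : {x : EuclideanSpace ℝ (Fin m × Fin d) // x ≠ 0},
      Real.sqrt (∑ s, μ s * (fderiv ℝ V θstar x.1 s) ^ 2) / ‖x.1‖ with hσsdef
  -- basic norms in coordinates
  have hnormsq : ∀ x : EuclideanSpace ℝ (Fin m × Fin d),
      ‖x‖^2 = ∑ r : Fin m, ∑ j : Fin d, (x (r,j))^2 := by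
    intro x
    rw [show ‖x‖^2 = ∑ i, ‖x i‖^2 from PiLp.norm_sq_eq_of_L2 _ x]
    rw [show ∑ i, ‖x i‖^2 = ∑ i : Fin m × Fin d, (x i)^2 by
      exact Finset.sum_congr rfl fun i _ => by rw [Real.norm_eq_abs, sq_abs]]
    rw [Fintype.sum_prod_type]
  have hembsq : ∀ s, ∑ j, (emb s j)^2 ≤ 1 := by
    intro s
    have h1 : ‖emb s‖^2 ≤ 1 := by nlinarith [hemb s, norm_nonneg (emb s)]
    have h2 : ‖emb s‖^2 = ∑ j, ‖emb s j‖^2 := PiLp.norm_sq_eq_of_L2 _ (emb s)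
    calc ∑ j, (emb s j)^2 = ∑ j, ‖emb s j‖^2 := by
          exact Finset.sum_congr rfl fun j _ => by rw [Real.norm_eq_abs, sq_abs]
      _ ≤ 1 := by rw [← h2]; exact h1
  have hsubapp : ∀ (θ₁ θ₂ : EuclideanSpace ℝ (Fin m × Fin d)) (i : Fin m × Fin d),
      (θ₁ - θ₂) i = θ₁ i - θ₂ i := fun _ _ _ => rfl
  -- row Cauchy-Schwarz
  have hrow : ∀ (x : EuclideanSpace ℝ (Fin m × Fin d)) (r : Fin m) (s : S),
      |∑ j, x (r,j) * emb s j| ≤ Real.sqrt (∑ j, (x (r,j))^2) := by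
    intro x r s
    have h1 : |∑ j, x (r,j) * emb s j| ≤ ∑ j, |x (r,j)| * |emb s j| := by
      calc |∑ j, x (r,j) * emb s j| ≤ ∑ j, |x (r,j) * emb s j| := Finset.abs_sum_le_sum_abs _ _
        _ = ∑ j, |x (r,j)| * |emb s j| := by
            exact Finset.sum_congr rfl fun j _ => abs_mul _ _
    have h2 := Real.sum_mul_le_sqrt_mul_sqrt Finset.univ (fun j => |x (r,j)|) (fun j => |emb s j|)
    simp only [sq_abs] at h2
    have h3 : Real.sqrt (∑ j, (emb s j)^2) ≤ 1 := by
      rw [show (1:ℝ) = Real.sqrt 1 by simp]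
      exact Real.sqrt_le_sqrt (hembsq s)
    calc |∑ j, x (r,j) * emb s j| ≤ Real.sqrt (∑ j, (x (r,j))^2) * Real.sqrt (∑ j, (emb s j)^2) :=
          le_trans h1 h2
      _ ≤ Real.sqrt (∑ j, (x (r,j))^2) * 1 :=
          mul_le_mul_of_nonneg_left h3 (Real.sqrt_nonneg _)
      _ = _ := mul_one _
  -- difference of V
  have hVsub : ∀ (θ₁ θ₂ : EuclideanSpace ℝ (Fin m × Fin d)) (s : S), V θ₁ s - V θ₂ s
      = (1/Real.sqrt m) * ∑ r, b r *
          (σ (∑ j, θ₁ (r,j) * emb s j) - σ (∑ j, θ₂ (r,j) * emb s j)) := by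
    intro θ₁ θ₂ s
    rw [hV θ₁ s, hV θ₂ s, ← mul_sub, ← Finset.sum_sub_distrib]
    congr 1
    exact Finset.sum_congr rfl fun r _ => by ring
  -- Lipschitz property of V in θ
  have hVlip : ∀ (θ₁ θ₂ : EuclideanSpace ℝ (Fin m × Fin d)) (s : S),
      |V θ₁ s - V θ₂ s| ≤ l * ‖θ₁ - θ₂‖ := by
    intro θ₁ θ₂ s
    rw [hVsub θ₁ θ₂ s]
    have hdiffarg : ∀ r : Fin m, (∑ j, θ₁ (r,j) * emb s j) - (∑ j, θ₂ (r,j) * emb s j)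
        = ∑ j, (θ₁ - θ₂) (r,j) * emb s j := by
      intro r
      rw [← Finset.sum_sub_distrib]
      exact Finset.sum_congr rfl fun j _ => by rw [hsubapp]; ring
    have key : ∀ r : Fin m,
        |b r * (σ (∑ j, θ₁ (r,j) * emb s j) - σ (∑ j, θ₂ (r,j) * emb s j))|
          ≤ l * Real.sqrt (∑ j, ((θ₁ - θ₂) (r,j))^2) := by
      intro r
      rw [abs_mul]
      have h1 : |σ (∑ j, θ₁ (r,j) * emb s j) - σ (∑ j, θ₂ (r,j) * emb s j)|
          ≤ l * Real.sqrt (∑ j, ((θ₁ - θ₂) (r,j))^2) := by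
        calc |σ (∑ j, θ₁ (r,j) * emb s j) - σ (∑ j, θ₂ (r,j) * emb s j)|
            ≤ l * |(∑ j, θ₁ (r,j) * emb s j) - (∑ j, θ₂ (r,j) * emb s j)| := hσlip _ _
          _ = l * |∑ j, (θ₁ - θ₂) (r,j) * emb s j| := by rw [hdiffarg r]
          _ ≤ l * Real.sqrt (∑ j, ((θ₁ - θ₂) (r,j))^2) :=
              mul_le_mul_of_nonneg_left (hrow (θ₁ - θ₂) r s) hl
      calc |b r| * |σ (∑ j, θ₁ (r,j) * emb s j) - σ (∑ j, θ₂ (r,j) * emb s j)|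
          ≤ 1 * (l * Real.sqrt (∑ j, ((θ₁ - θ₂) (r,j))^2)) :=
            mul_le_mul (hb r) h1 (abs_nonneg _) zero_le_one
        _ = _ := one_mul _
    have hCSr : ∑ r : Fin m, Real.sqrt (∑ j, ((θ₁ - θ₂) (r,j))^2)
        ≤ Real.sqrt m * ‖θ₁ - θ₂‖ := by
      have h2 := Real.sum_mul_le_sqrt_mul_sqrt Finset.univ (fun _ : Fin m => (1:ℝ))
        (fun r => Real.sqrt (∑ j, ((θ₁ - θ₂) (r,j))^2))
      have h3 : ∀ r : Fin m, (Real.sqrt (∑ j, ((θ₁ - θ₂) (r,j))^2))^2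
          = ∑ j, ((θ₁ - θ₂) (r,j))^2 := fun r =>
        Real.sq_sqrt (Finset.sum_nonneg fun j _ => sq_nonneg _)
      calc ∑ r : Fin m, Real.sqrt (∑ j, ((θ₁ - θ₂) (r,j))^2)
          = ∑ r : Fin m, 1 * Real.sqrt (∑ j, ((θ₁ - θ₂) (r,j))^2) := by
            exact Finset.sum_congr rfl fun r _ => (one_mul _).symm
        _ ≤ Real.sqrt (∑ _r : Fin m, (1:ℝ)^2) *
            Real.sqrt (∑ r, (Real.sqrt (∑ j, ((θ₁ - θ₂) (r,j))^2))^2) := h2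
        _ = Real.sqrt m * ‖θ₁ - θ₂‖ := by
            congr 1
            · congr 1; simp
            · rw [show ∑ r, (Real.sqrt (∑ j, ((θ₁ - θ₂) (r,j))^2))^2
                  = ∑ r, ∑ j, ((θ₁ - θ₂) (r,j))^2 from
                    Finset.sum_congr rfl fun r _ => h3 r, ← hnormsq]
              exact Real.sqrt_sq (norm_nonneg _)
    calc |(1/Real.sqrt m) * ∑ r, b r *
          (σ (∑ j, θ₁ (r,j) * emb s j) - σ (∑ j, θ₂ (r,j) * emb s j))|
        = (1/Real.sqrt m) * |∑ r, b r *
          (σ (∑ j, θ₁ (r,j) * emb s j) - σ (∑ j, θ₂ (r,j) * emb s j))| := by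
          rw [abs_mul, abs_of_pos (by positivity)]
      _ ≤ (1/Real.sqrt m) * ∑ r, |b r *
          (σ (∑ j, θ₁ (r,j) * emb s j) - σ (∑ j, θ₂ (r,j) * emb s j))| :=
          mul_le_mul_of_nonneg_left (Finset.abs_sum_le_sum_abs _ _) (by positivity)
      _ ≤ (1/Real.sqrt m) * ∑ r, l * Real.sqrt (∑ j, ((θ₁ - θ₂) (r,j))^2) :=
          mul_le_mul_of_nonneg_left (Finset.sum_le_sum fun r _ => key r) (by positivity)
      _ = (1/Real.sqrt m) * (l * ∑ r, Real.sqrt (∑ j, ((θ₁ - θ₂) (r,j))^2)) := by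
          rw [← Finset.mul_sum]
      _ ≤ (1/Real.sqrt m) * (l * (Real.sqrt m * ‖θ₁ - θ₂‖)) :=
          mul_le_mul_of_nonneg_left (mul_le_mul_of_nonneg_left hCSr hl) (by positivity)
      _ = l * ‖θ₁ - θ₂‖ := by
          field_simp
  -- gradient norm bound
  have hgnorm : ∀ (θ' : EuclideanSpace ℝ (Fin m × Fin d)) (s : S), ‖gradV θ' s‖ ≤ l := by
    intro θ' s
    have h1 : ‖gradV θ' s‖^2 = ∑ r : Fin m, ∑ j : Fin d, (gradV θ' s (r,j))^2 := hnormsq _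
    have h2 : ∀ (r : Fin m) (j : Fin d), (gradV θ' s (r,j))^2
        ≤ (1/Real.sqrt m)^2 * (l^2 * (emb s j)^2) := by
      intro r j
      rw [hgradV θ' s r j]
      have hb2 : (b r)^2 ≤ 1 := by nlinarith [hb r, abs_nonneg (b r), sq_abs (b r)]
      have hd2 : (deriv σ (∑ j', θ' (r,j') * emb s j'))^2 ≤ l^2 := by
        nlinarith [hdb (∑ j', θ' (r,j') * emb s j'),
          abs_nonneg (deriv σ (∑ j', θ' (r,j') * emb s j')),
          sq_abs (deriv σ (∑ j', θ' (r,j') * emb s j'))]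
      calc (1/Real.sqrt m * b r * deriv σ (∑ j', θ' (r,j') * emb s j') * emb s j)^2
          = (b r)^2 * ((deriv σ (∑ j', θ' (r,j') * emb s j'))^2
              * ((1/Real.sqrt m)^2 * (emb s j)^2)) := by ring
        _ ≤ 1 * ((deriv σ (∑ j', θ' (r,j') * emb s j'))^2
              * ((1/Real.sqrt m)^2 * (emb s j)^2)) :=
            mul_le_mul_of_nonneg_right hb2 (by positivity)
        _ = (deriv σ (∑ j', θ' (r,j') * emb s j'))^2 * ((1/Real.sqrt m)^2 * (emb s j)^2) :=
            one_mul _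
        _ ≤ l^2 * ((1/Real.sqrt m)^2 * (emb s j)^2) :=
            mul_le_mul_of_nonneg_right hd2 (by positivity)
        _ = (1/Real.sqrt m)^2 * (l^2 * (emb s j)^2) := by ring
    have hcm2 : (1/Real.sqrt m : ℝ)^2 = 1/(m:ℝ) := by
      rw [div_pow, one_pow, Real.sq_sqrt hmR.le]
    have h3 : ‖gradV θ' s‖^2 ≤ l^2 := by
      calc ‖gradV θ' s‖^2 = ∑ r : Fin m, ∑ j : Fin d, (gradV θ' s (r,j))^2 := h1
        _ ≤ ∑ r : Fin m, ∑ j : Fin d, (1/Real.sqrt m)^2 * (l^2 * (emb s j)^2) :=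
            Finset.sum_le_sum fun r _ => Finset.sum_le_sum fun j _ => h2 r j
        _ = ∑ r : Fin m, (1/Real.sqrt m)^2 * (l^2 * ∑ j : Fin d, (emb s j)^2) := by
            exact Finset.sum_congr rfl fun r _ => by rw [← Finset.mul_sum, ← Finset.mul_sum]
        _ ≤ ∑ r : Fin m, (1/Real.sqrt m)^2 * (l^2 * 1) := by
            refine Finset.sum_le_sum fun r _ => ?_
            exact mul_le_mul_of_nonneg_left (mul_le_mul_of_nonneg_left (hembsq s)
              (sq_nonneg l)) (by positivity)
        _ = (m:ℝ) * ((1/Real.sqrt m)^2 * (l^2 * 1)) := by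
            rw [Finset.sum_const, Finset.card_univ, Fintype.card_fin, nsmul_eq_mul]
        _ = l^2 := by rw [hcm2]; field_simp
    nlinarith [norm_nonneg (gradV θ' s), h3, hl]
  -- inner product with gradient, in coordinates
  have hinner : ∀ (θ' x : EuclideanSpace ℝ (Fin m × Fin d)) (s : S),
      (inner ℝ (gradV θ' s) x : ℝ)
      = (1/Real.sqrt m) * ∑ r, b r *
          (deriv σ (∑ j', θ' (r,j') * emb s j') * (∑ j, x (r,j) * emb s j)) := by
    intro θ' x s
    rw [show (inner ℝ (gradV θ' s) x : ℝ) = ∑ i, gradV θ' s i * x i by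
      simp [PiLp.inner_apply, RCLike.inner_apply, mul_comm]]
    rw [Fintype.sum_prod_type, Finset.mul_sum]
    refine Finset.sum_congr rfl fun r _ => ?_
    simp only [Finset.mul_sum]
    refine Finset.sum_congr rfl fun j _ => ?_
    rw [hgradV θ' s r j]
    ring
  -- Taylor bound for V
  have htayV : ∀ (θ₁ θ₂ : EuclideanSpace ℝ (Fin m × Fin d)) (s : S),
      |V θ₁ s - V θ₂ s - (inner ℝ (gradV θ₂ s) (θ₁ - θ₂) : ℝ)| ≤ κ * ‖θ₁ - θ₂‖^2 := by
    intro θ₁ θ₂ s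
    have hargadd : ∀ r : Fin m, (∑ j, θ₁ (r,j) * emb s j)
        = (∑ j, θ₂ (r,j) * emb s j) + ∑ j, (θ₁ - θ₂) (r,j) * emb s j := by
      intro r
      rw [← Finset.sum_add_distrib]
      exact Finset.sum_congr rfl fun j _ => by rw [hsubapp]; ring
    have hid : V θ₁ s - V θ₂ s - (inner ℝ (gradV θ₂ s) (θ₁ - θ₂) : ℝ)
        = (1/Real.sqrt m) * ∑ r, b r *
            (σ ((∑ j, θ₂ (r,j) * emb s j) + ∑ j, (θ₁ - θ₂) (r,j) * emb s j)
              - σ (∑ j, θ₂ (r,j) * emb s j)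
              - deriv σ (∑ j, θ₂ (r,j) * emb s j) * (∑ j, (θ₁ - θ₂) (r,j) * emb s j)) := by
      rw [hVsub θ₁ θ₂ s, hinner θ₂ (θ₁ - θ₂) s, ← mul_sub, ← Finset.sum_sub_distrib]
      congr 1
      refine Finset.sum_congr rfl fun r _ => ?_
      rw [hargadd r]
      ring_nf
    rw [hid]
    have key : ∀ r : Fin m, |b r *
        (σ ((∑ j, θ₂ (r,j) * emb s j) + ∑ j, (θ₁ - θ₂) (r,j) * emb s j)
          - σ (∑ j, θ₂ (r,j) * emb s j)
          - deriv σ (∑ j, θ₂ (r,j) * emb s j) * (∑ j, (θ₁ - θ₂) (r,j) * emb s j))|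
        ≤ c0/2 * ∑ j, ((θ₁ - θ₂) (r,j))^2 := by
      intro r
      rw [abs_mul]
      have h1 := htay (∑ j, θ₂ (r,j) * emb s j) (∑ j, (θ₁ - θ₂) (r,j) * emb s j)
      have h2 : (∑ j, (θ₁ - θ₂) (r,j) * emb s j)^2 ≤ ∑ j, ((θ₁ - θ₂) (r,j))^2 := by
        have h3 := hrow (θ₁ - θ₂) r s
        have h4 : (0:ℝ) ≤ ∑ j, ((θ₁ - θ₂) (r,j))^2 :=
          Finset.sum_nonneg fun j _ => sq_nonneg _
        nlinarith [Real.sq_sqrt h4, abs_nonneg (∑ j, (θ₁ - θ₂) (r,j) * emb s j),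
          sq_abs (∑ j, (θ₁ - θ₂) (r,j) * emb s j), Real.sqrt_nonneg (∑ j, ((θ₁ - θ₂) (r,j))^2)]
      calc |b r| * |σ ((∑ j, θ₂ (r,j) * emb s j) + ∑ j, (θ₁ - θ₂) (r,j) * emb s j)
          - σ (∑ j, θ₂ (r,j) * emb s j)
          - deriv σ (∑ j, θ₂ (r,j) * emb s j) * (∑ j, (θ₁ - θ₂) (r,j) * emb s j)|
          ≤ 1 * (c0/2 * (∑ j, (θ₁ - θ₂) (r,j) * emb s j)^2) :=
            mul_le_mul (hb r) h1 (abs_nonneg _) zero_le_one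
        _ = c0/2 * (∑ j, (θ₁ - θ₂) (r,j) * emb s j)^2 := one_mul _
        _ ≤ c0/2 * ∑ j, ((θ₁ - θ₂) (r,j))^2 := mul_le_mul_of_nonneg_left h2 (by positivity)
    calc |(1/Real.sqrt m) * ∑ r, b r *
        (σ ((∑ j, θ₂ (r,j) * emb s j) + ∑ j, (θ₁ - θ₂) (r,j) * emb s j)
          - σ (∑ j, θ₂ (r,j) * emb s j)
          - deriv σ (∑ j, θ₂ (r,j) * emb s j) * (∑ j, (θ₁ - θ₂) (r,j) * emb s j))|
        = (1/Real.sqrt m) * |∑ r, b r *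
        (σ ((∑ j, θ₂ (r,j) * emb s j) + ∑ j, (θ₁ - θ₂) (r,j) * emb s j)
          - σ (∑ j, θ₂ (r,j) * emb s j)
          - deriv σ (∑ j, θ₂ (r,j) * emb s j) * (∑ j, (θ₁ - θ₂) (r,j) * emb s j))| := by
          rw [abs_mul, abs_of_pos (by positivity)]
      _ ≤ (1/Real.sqrt m) * ∑ r, |b r *
        (σ ((∑ j, θ₂ (r,j) * emb s j) + ∑ j, (θ₁ - θ₂) (r,j) * emb s j)
          - σ (∑ j, θ₂ (r,j) * emb s j)
          - deriv σ (∑ j, θ₂ (r,j) * emb s j) * (∑ j, (θ₁ - θ₂) (r,j) * emb s j))| :=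
          mul_le_mul_of_nonneg_left (Finset.abs_sum_le_sum_abs _ _) (by positivity)
      _ ≤ (1/Real.sqrt m) * ∑ r, c0/2 * ∑ j, ((θ₁ - θ₂) (r,j))^2 :=
          mul_le_mul_of_nonneg_left (Finset.sum_le_sum fun r _ => key r) (by positivity)
      _ = (1/Real.sqrt m) * (c0/2 * ∑ r, ∑ j, ((θ₁ - θ₂) (r,j))^2) := by
          rw [← Finset.mul_sum]
      _ = κ * ‖θ₁ - θ₂‖^2 := by
          rw [← hnormsq, hκdef]
          ring
  -- bound on V at θstar
  have hNS : Nonempty S := by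
    rcases isEmpty_or_nonempty S with h | h
    · exfalso
      rw [Finset.univ_eq_empty, Finset.sum_empty] at hμsum
      exact one_ne_zero hμsum.symm
    · exact h
  have hVstarb : ∀ s, |V θstar s| ≤ rmax / (1 - γ) := by
    obtain ⟨s0, -, hs0⟩ := Finset.exists_max_image Finset.univ (fun s => |V θstar s|)
      ⟨Classical.arbitrary S, Finset.mem_univ _⟩
    have hmax : ∀ s, |V θstar s| ≤ |V θstar s0| := fun s => hs0 s (Finset.mem_univ s)
    have hstep : |V θstar s0| ≤ rmax + γ * |V θstar s0| := by
      calc |V θstar s0| = |rew s0 + γ * ∑ s'', P s0 s'' * V θstar s''| := by rw [hbellman s0]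
        _ ≤ |rew s0| + |γ * ∑ s'', P s0 s'' * V θstar s''| := abs_add_le _ _
        _ ≤ rmax + γ * |∑ s'', P s0 s'' * V θstar s''| := by
            rw [abs_mul, abs_of_pos hγ0]
            exact add_le_add_left (hrew s0) _
        _ ≤ rmax + γ * (∑ s'', P s0 s'' * |V θstar s0|) := by
            refine add_le_add_right (mul_le_mul_of_nonneg_left ?_ hγ0.le) rmax
            calc |∑ s'', P s0 s'' * V θstar s''| ≤ ∑ s'', |P s0 s'' * V θstar s''| :=
                  Finset.abs_sum_le_sum_abs _ _
              _ = ∑ s'', P s0 s'' * |V θstar s''| := by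
                  exact Finset.sum_congr rfl fun s'' _ => by
                    rw [abs_mul, abs_of_nonneg (hPnonneg s0 s'')]
              _ ≤ ∑ s'', P s0 s'' * |V θstar s0| :=
                  Finset.sum_le_sum fun s'' _ =>
                    mul_le_mul_of_nonneg_left (hmax s'') (hPnonneg s0 s'')
        _ = rmax + γ * |V θstar s0| := by rw [← Finset.sum_mul, hProw s0, one_mul]
    have hM : |V θstar s0| ≤ rmax / (1 - γ) := by
      rw [le_div_iff₀ hγ']
      nlinarith [hstep]
    exact fun s => le_trans (hmax s) hM
  -- stationarity swap
  have hswap : ∀ f : S → ℝ, ∑ s, μ s * ∑ s', P s s' * f s' = ∑ s', μ s' * f s' := by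
    intro f
    calc ∑ s, μ s * ∑ s', P s s' * f s' = ∑ s, ∑ s', μ s * P s s' * f s' := by
          refine Finset.sum_congr rfl fun s _ => ?_
          rw [Finset.mul_sum]
          exact Finset.sum_congr rfl fun s' _ => by ring
      _ = ∑ s', ∑ s, μ s * P s s' * f s' := Finset.sum_comm
      _ = ∑ s', (∑ s, μ s * P s s') * f s' := by
          refine Finset.sum_congr rfl fun s' _ => ?_
          rw [Finset.sum_mul]
      _ = ∑ s', μ s' * f s' := by
          refine Finset.sum_congr rfl fun s' _ => ?_
          rw [hstat s']
  -- bound on Bellman residual terms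
  have hq : ∀ s s', |rew s + γ * V θstar s' - V θstar s| ≤ 2*γ*rmax/(1-γ) := by
    intro s s'
    have h1 : rew s + γ * V θstar s' - V θstar s
        = γ * (V θstar s' - ∑ s'', P s s'' * V θstar s'') := by
      rw [hbellman s]
      ring
    rw [h1, abs_mul, abs_of_pos hγ0]
    have h2 : |∑ s'', P s s'' * V θstar s''| ≤ rmax/(1-γ) := by
      calc |∑ s'', P s s'' * V θstar s''| ≤ ∑ s'', |P s s'' * V θstar s''| :=
            Finset.abs_sum_le_sum_abs _ _
        _ = ∑ s'', P s s'' * |V θstar s''| := by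
            exact Finset.sum_congr rfl fun s'' _ => by
              rw [abs_mul, abs_of_nonneg (hPnonneg s s'')]
        _ ≤ ∑ s'', P s s'' * (rmax/(1-γ)) :=
            Finset.sum_le_sum fun s'' _ =>
              mul_le_mul_of_nonneg_left (hVstarb s'') (hPnonneg s s'')
        _ = rmax/(1-γ) := by rw [← Finset.sum_mul, hProw s, one_mul]
    have h3 : |V θstar s' - ∑ s'', P s s'' * V θstar s''| ≤ rmax/(1-γ) + rmax/(1-γ) := by
      calc |V θstar s' - ∑ s'', P s s'' * V θstar s''|
          ≤ |V θstar s'| + |∑ s'', P s s'' * V θstar s''| := abs_sub _ _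
        _ ≤ rmax/(1-γ) + rmax/(1-γ) := add_le_add (hVstarb s') h2
    calc γ * |V θstar s' - ∑ s'', P s s'' * V θstar s''| ≤ γ * (rmax/(1-γ) + rmax/(1-γ)) :=
          mul_le_mul_of_nonneg_left h3 hγ0.le
      _ = 2*γ*rmax/(1-γ) := by ring
  -- expansion of the squared norm
  have hexp : ∀ s s', ‖θ + (α * (rew s + γ * V θ s' - V θ s)) • gradV θ s - θstar‖ ^ 2
      = ‖θ - θstar‖^2
        + 2*α*(rew s + γ * V θ s' - V θ s) * (inner ℝ (θ - θstar) (gradV θ s) : ℝ)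
        + α^2*(rew s + γ * V θ s' - V θ s)^2 * ‖gradV θ s‖^2 := by
    intro s s'
    have h0 : θ + (α * (rew s + γ * V θ s' - V θ s)) • gradV θ s - θstar
        = (θ - θstar) + (α * (rew s + γ * V θ s' - V θ s)) • gradV θ s := by abel
    rw [h0, norm_add_sq_real, real_inner_smul_right, norm_smul]
    simp only [Real.norm_eq_abs, mul_pow, sq_abs]
    ring
  -- expected TD error
  have hTD : ∀ s, ∑ s', P s s' * (rew s + γ * V θ s' - V θ s)
      = γ * (∑ s', P s s' * (V θ s' - V θstar s')) - (V θ s - V θstar s) := by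
    intro s
    have h1 : ∑ s', P s s' * (rew s + γ * V θ s' - V θ s)
        = (∑ s', P s s') * (rew s - V θ s) + γ * ∑ s', P s s' * V θ s' := by
      calc ∑ s', P s s' * (rew s + γ * V θ s' - V θ s)
          = ∑ s', (P s s' * (rew s - V θ s) + γ * (P s s' * V θ s')) :=
            Finset.sum_congr rfl fun s' _ => by ring
        _ = (∑ s', P s s' * (rew s - V θ s)) + γ * ∑ s', P s s' * V θ s' := by
            rw [Finset.sum_add_distrib, Finset.mul_sum]
        _ = (∑ s', P s s') * (rew s - V θ s) + γ * ∑ s', P s s' * V θ s' := by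
            rw [← Finset.sum_mul]
    have h2 : ∑ s', P s s' * V θ s'
        = (∑ s', P s s' * (V θ s' - V θstar s')) + ∑ s', P s s' * V θstar s' := by
      rw [← Finset.sum_add_distrib]
      exact Finset.sum_congr rfl fun s' _ => by ring
    have hb' := hbellman s
    rw [h1, hProw s, h2]
    linear_combination -hb'
  -- total decomposition of the objective
  have hsum : ∑ s, μ s * ∑ s', P s s' *
        ‖θ + (α * (rew s + γ * V θ s' - V θ s)) • gradV θ s - θstar‖ ^ 2
      = ‖θ - θstar‖^2
        + 2*α*(∑ s, μ s * ((inner ℝ (θ - θstar) (gradV θ s) : ℝ)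
            * (γ * (∑ s', P s s' * (V θ s' - V θstar s')) - (V θ s - V θstar s))))
        + α^2 * ∑ s, μ s * ∑ s', P s s' *
            ((rew s + γ * V θ s' - V θ s)^2 * ‖gradV θ s‖^2) := by
    have h1 : ∀ s, ∑ s', P s s' * ‖θ + (α * (rew s + γ * V θ s' - V θ s)) • gradV θ s - θstar‖ ^ 2
        = ‖θ - θstar‖^2
          + 2*α*((inner ℝ (θ - θstar) (gradV θ s) : ℝ)
              * (γ * (∑ s', P s s' * (V θ s' - V θstar s')) - (V θ s - V θstar s)))
          + α^2 * ∑ s', P s s' * ((rew s + γ * V θ s' - V θ s)^2 * ‖gradV θ s‖^2) := by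
      intro s
      calc ∑ s', P s s' * ‖θ + (α * (rew s + γ * V θ s' - V θ s)) • gradV θ s - θstar‖ ^ 2
          = ∑ s', (‖θ - θstar‖^2 * P s s'
              + (2*α*(inner ℝ (θ - θstar) (gradV θ s) : ℝ))
                  * (P s s' * (rew s + γ * V θ s' - V θ s))
              + α^2 * (P s s' * ((rew s + γ * V θ s' - V θ s)^2 * ‖gradV θ s‖^2))) := by
            refine Finset.sum_congr rfl fun s' _ => ?_
            rw [hexp s s']
            ring
        _ = ‖θ - θstar‖^2 * (∑ s', P s s')
              + (2*α*(inner ℝ (θ - θstar) (gradV θ s) : ℝ))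
                  * (∑ s', P s s' * (rew s + γ * V θ s' - V θ s))
              + α^2 * (∑ s', P s s' * ((rew s + γ * V θ s' - V θ s)^2 * ‖gradV θ s‖^2)) := by
            rw [Finset.sum_add_distrib, Finset.sum_add_distrib, ← Finset.mul_sum,
              ← Finset.mul_sum, ← Finset.mul_sum]
        _ = ‖θ - θstar‖^2
          + 2*α*((inner ℝ (θ - θstar) (gradV θ s) : ℝ)
              * (γ * (∑ s', P s s' * (V θ s' - V θstar s')) - (V θ s - V θstar s)))
          + α^2 * ∑ s', P s s' * ((rew s + γ * V θ s' - V θ s)^2 * ‖gradV θ s‖^2) := by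
            rw [hProw s, hTD s]
            ring
    calc ∑ s, μ s * ∑ s', P s s' *
        ‖θ + (α * (rew s + γ * V θ s' - V θ s)) • gradV θ s - θstar‖ ^ 2
        = ∑ s, (μ s * ‖θ - θstar‖^2
            + 2*α*(μ s * ((inner ℝ (θ - θstar) (gradV θ s) : ℝ)
              * (γ * (∑ s', P s s' * (V θ s' - V θstar s')) - (V θ s - V θstar s))))
            + α^2 * (μ s * ∑ s', P s s' * ((rew s + γ * V θ s' - V θ s)^2 * ‖gradV θ s‖^2))) := by
          refine Finset.sum_congr rfl fun s _ => ?_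
          rw [h1 s]
          ring
      _ = (∑ s, μ s * ‖θ - θstar‖^2)
            + 2*α*(∑ s, μ s * ((inner ℝ (θ - θstar) (gradV θ s) : ℝ)
              * (γ * (∑ s', P s s' * (V θ s' - V θstar s')) - (V θ s - V θstar s))))
            + α^2 * ∑ s, μ s * ∑ s', P s s' *
                ((rew s + γ * V θ s' - V θ s)^2 * ‖gradV θ s‖^2) := by
          rw [Finset.sum_add_distrib, Finset.sum_add_distrib, ← Finset.mul_sum, ← Finset.mul_sum]
      _ = ‖θ - θstar‖^2
            + 2*α*(∑ s, μ s * ((inner ℝ (θ - θstar) (gradV θ s) : ℝ)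
              * (γ * (∑ s', P s s' * (V θ s' - V θstar s')) - (V θ s - V θstar s))))
            + α^2 * ∑ s, μ s * ∑ s', P s s' *
                ((rew s + γ * V θ s' - V θ s)^2 * ‖gradV θ s‖^2) := by
          rw [← Finset.sum_mul, hμsum, one_mul]
  -- weighted Jensen-type bound
  have hJensen : ∑ s, μ s * ((V θ s - V θstar s) * ∑ s', P s s' * (V θ s' - V θstar s'))
      ≤ ∑ s, μ s * (V θ s - V θstar s)^2 := by
    have hpt : ∀ s, μ s * ((V θ s - V θstar s) * ∑ s', P s s' * (V θ s' - V θstar s'))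
        ≤ μ s * (∑ s', P s s' * (((V θ s - V θstar s)^2 + (V θ s' - V θstar s')^2)/2)) := by
      intro s
      refine mul_le_mul_of_nonneg_left ?_ (hμnonneg s)
      calc (V θ s - V θstar s) * ∑ s', P s s' * (V θ s' - V θstar s')
          = ∑ s', P s s' * ((V θ s - V θstar s) * (V θ s' - V θstar s')) := by
            rw [Finset.mul_sum]
            exact Finset.sum_congr rfl fun s' _ => by ring
        _ ≤ ∑ s', P s s' * (((V θ s - V θstar s)^2 + (V θ s' - V θstar s')^2)/2) := by
            refine Finset.sum_le_sum fun s' _ => ?_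
            refine mul_le_mul_of_nonneg_left ?_ (hPnonneg s s')
            nlinarith [sq_nonneg ((V θ s - V θstar s) - (V θ s' - V θstar s'))]
    calc ∑ s, μ s * ((V θ s - V θstar s) * ∑ s', P s s' * (V θ s' - V θstar s'))
        ≤ ∑ s, μ s * (∑ s', P s s' * (((V θ s - V θstar s)^2 + (V θ s' - V θstar s')^2)/2)) :=
          Finset.sum_le_sum fun s _ => hpt s
      _ = ∑ s, ((1/2) * (μ s * (V θ s - V θstar s)^2)
            + (1/2) * (μ s * ∑ s', P s s' * (V θ s' - V θstar s')^2)) := by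
          refine Finset.sum_congr rfl fun s _ => ?_
          have hin : ∑ s', P s s' * (((V θ s - V θstar s)^2 + (V θ s' - V θstar s')^2)/2)
              = (∑ s', P s s') * ((V θ s - V θstar s)^2/2)
                + (1/2) * ∑ s', P s s' * (V θ s' - V θstar s')^2 := by
            calc ∑ s', P s s' * (((V θ s - V θstar s)^2 + (V θ s' - V θstar s')^2)/2)
                = ∑ s', (P s s' * ((V θ s - V θstar s)^2/2)
                    + (1/2) * (P s s' * (V θ s' - V θstar s')^2)) :=
                  Finset.sum_congr rfl fun s' _ => by ring
              _ = _ := by rw [Finset.sum_add_distrib, ← Finset.sum_mul, ← Finset.mul_sum]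
          rw [hin, hProw s]
          ring
      _ = (1/2) * ∑ s, μ s * (V θ s - V θstar s)^2
            + (1/2) * ∑ s, μ s * ∑ s', P s s' * (V θ s' - V θstar s')^2 := by
          rw [Finset.sum_add_distrib, ← Finset.mul_sum, ← Finset.mul_sum]
      _ = ∑ s, μ s * (V θ s - V θstar s)^2 := by
          rw [hswap (fun t => (V θ t - V θstar t)^2)]
          ring
  -- Taylor error at θ (gradient at θ)
  have hes : ∀ s, |(inner ℝ (θ - θstar) (gradV θ s) : ℝ) - (V θ s - V θstar s)| ≤ κ * n^2 := by
    intro s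
    have h := htayV θstar θ s
    have h1 : (inner ℝ (gradV θ s) (θstar - θ) : ℝ) = -(inner ℝ (θ - θstar) (gradV θ s) : ℝ) := by
      rw [show θstar - θ = -(θ - θstar) from (neg_sub _ _).symm, inner_neg_right,
        real_inner_comm]
    rw [h1] at h
    have h2 : ‖θstar - θ‖ = n := by rw [norm_sub_rev]
    rw [h2] at h
    have h3 : V θstar s - V θ s - -(inner ℝ (θ - θstar) (gradV θ s) : ℝ)
        = (inner ℝ (θ - θstar) (gradV θ s) : ℝ) - (V θ s - V θstar s) := by ring
    rwa [h3] at h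
  have hΔb : ∀ s, |V θ s - V θstar s| ≤ l * n := fun s => hVlip θ θstar s
  have hEΔb : ∀ s, |∑ s', P s s' * (V θ s' - V θstar s')| ≤ l * n := by
    intro s
    calc |∑ s', P s s' * (V θ s' - V θstar s')| ≤ ∑ s', |P s s' * (V θ s' - V θstar s')| :=
          Finset.abs_sum_le_sum_abs _ _
      _ = ∑ s', P s s' * |V θ s' - V θstar s'| := by
          exact Finset.sum_congr rfl fun s' _ => by
            rw [abs_mul, abs_of_nonneg (hPnonneg s s')]
      _ ≤ ∑ s', P s s' * (l * n) :=
          Finset.sum_le_sum fun s' _ => mul_le_mul_of_nonneg_left (hΔb s') (hPnonneg s s')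
      _ = l * n := by rw [← Finset.sum_mul, hProw s, one_mul]
  -- cross term bound
  have hT2 : ∑ s, μ s * ((inner ℝ (θ - θstar) (gradV θ s) : ℝ)
        * (γ * (∑ s', P s s' * (V θ s' - V θstar s')) - (V θ s - V θstar s)))
      ≤ -((1-γ) * ∑ s, μ s * (V θ s - V θstar s)^2) + (1+γ)*l*κ*n^3 := by
    have hsplit : ∑ s, μ s * ((inner ℝ (θ - θstar) (gradV θ s) : ℝ)
          * (γ * (∑ s', P s s' * (V θ s' - V θstar s')) - (V θ s - V θstar s)))
        = (γ * (∑ s, μ s * ((V θ s - V θstar s) * ∑ s', P s s' * (V θ s' - V θstar s')))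
            - ∑ s, μ s * (V θ s - V θstar s)^2)
          + ∑ s, μ s * (((inner ℝ (θ - θstar) (gradV θ s) : ℝ) - (V θ s - V θstar s))
              * (γ * (∑ s', P s s' * (V θ s' - V θstar s')) - (V θ s - V θstar s))) := by
      rw [Finset.mul_sum, ← Finset.sum_sub_distrib, ← Finset.sum_add_distrib]
      exact Finset.sum_congr rfl fun s _ => by ring
    rw [hsplit]
    have hpart1 : γ * (∑ s, μ s * ((V θ s - V θstar s) * ∑ s', P s s' * (V θ s' - V θstar s')))
          - ∑ s, μ s * (V θ s - V θstar s)^2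
        ≤ -((1-γ) * ∑ s, μ s * (V θ s - V θstar s)^2) := by
      have := mul_le_mul_of_nonneg_left hJensen hγ0.le
      nlinarith [this]
    have hpart2 : ∑ s, μ s * (((inner ℝ (θ - θstar) (gradV θ s) : ℝ) - (V θ s - V θstar s))
          * (γ * (∑ s', P s s' * (V θ s' - V θstar s')) - (V θ s - V θstar s)))
        ≤ (1+γ)*l*κ*n^3 := by
      have hpt : ∀ s, μ s * (((inner ℝ (θ - θstar) (gradV θ s) : ℝ) - (V θ s - V θstar s))
            * (γ * (∑ s', P s s' * (V θ s' - V θstar s')) - (V θ s - V θstar s)))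
          ≤ μ s * ((κ*n^2) * ((1+γ)*(l*n))) := by
        intro s
        refine mul_le_mul_of_nonneg_left ?_ (hμnonneg s)
        have habs : |γ * (∑ s', P s s' * (V θ s' - V θstar s')) - (V θ s - V θstar s)|
            ≤ (1+γ)*(l*n) := by
          calc |γ * (∑ s', P s s' * (V θ s' - V θstar s')) - (V θ s - V θstar s)|
              ≤ |γ * (∑ s', P s s' * (V θ s' - V θstar s'))| + |V θ s - V θstar s| := abs_sub _ _
            _ ≤ γ * (l*n) + l*n := by
                rw [abs_mul, abs_of_pos hγ0]
                exact add_le_add (mul_le_mul_of_nonneg_left (hEΔb s) hγ0.le) (hΔb s)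
            _ = (1+γ)*(l*n) := by ring
        calc ((inner ℝ (θ - θstar) (gradV θ s) : ℝ) - (V θ s - V θstar s))
              * (γ * (∑ s', P s s' * (V θ s' - V θstar s')) - (V θ s - V θstar s))
            ≤ |((inner ℝ (θ - θstar) (gradV θ s) : ℝ) - (V θ s - V θstar s))
              * (γ * (∑ s', P s s' * (V θ s' - V θstar s')) - (V θ s - V θstar s))| :=
              le_abs_self _
          _ = |(inner ℝ (θ - θstar) (gradV θ s) : ℝ) - (V θ s - V θstar s)|
              * |γ * (∑ s', P s s' * (V θ s' - V θstar s')) - (V θ s - V θstar s)| := abs_mul _ _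
          _ ≤ (κ*n^2) * ((1+γ)*(l*n)) :=
              mul_le_mul (hes s) habs (abs_nonneg _) (by positivity)
      calc ∑ s, μ s * (((inner ℝ (θ - θstar) (gradV θ s) : ℝ) - (V θ s - V θstar s))
            * (γ * (∑ s', P s s' * (V θ s' - V θstar s')) - (V θ s - V θstar s)))
          ≤ ∑ s, μ s * ((κ*n^2) * ((1+γ)*(l*n))) := Finset.sum_le_sum fun s _ => hpt s
        _ = (κ*n^2) * ((1+γ)*(l*n)) := by rw [← Finset.sum_mul, hμsum, one_mul]
        _ = (1+γ)*l*κ*n^3 := by ring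
    linarith [hpart1, hpart2]
  -- quadratic term bound
  have hDD2 : ∑ s, μ s * (V θ s - V θstar s)^2 ≤ l^2*n^2 := by
    calc ∑ s, μ s * (V θ s - V θstar s)^2 ≤ ∑ s, μ s * (l*n)^2 := by
          refine Finset.sum_le_sum fun s _ => ?_
          refine mul_le_mul_of_nonneg_left ?_ (hμnonneg s)
          nlinarith [hΔb s, abs_nonneg (V θ s - V θstar s), sq_abs (V θ s - V θstar s)]
      _ = (l*n)^2 := by rw [← Finset.sum_mul, hμsum, one_mul]
      _ = l^2*n^2 := by ring
  have hT3 : ∑ s, μ s * ∑ s', P s s' * ((rew s + γ * V θ s' - V θ s)^2 * ‖gradV θ s‖^2)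
      ≤ l^2*(3*(2*γ*rmax/(1-γ))^2)
        + 3*γ^2*l^2*(∑ s, μ s * (V θ s - V θstar s)^2)
        + 3*l^2*(∑ s, μ s * (V θ s - V θstar s)^2) := by
    have hpt : ∀ s s', P s s' * ((rew s + γ * V θ s' - V θ s)^2 * ‖gradV θ s‖^2)
        ≤ P s s' * (l^2*(3*(2*γ*rmax/(1-γ))^2) + 3*γ^2*l^2*(V θ s' - V θstar s')^2
            + 3*l^2*(V θ s - V θstar s)^2) := by
      intro s s'
      refine mul_le_mul_of_nonneg_left ?_ (hPnonneg s s')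
      have hgsq : ‖gradV θ s‖^2 ≤ l^2 := by
        nlinarith [hgnorm θ s, norm_nonneg (gradV θ s)]
      have hqq := hq s s'
      have hq2 : (rew s + γ * V θstar s' - V θstar s)^2 ≤ (2*γ*rmax/(1-γ))^2 := by
        nlinarith [hqq, abs_nonneg (rew s + γ * V θstar s' - V θstar s),
          sq_abs (rew s + γ * V θstar s' - V θstar s)]
      have hδ : (rew s + γ * V θ s' - V θ s)^2
          ≤ 3*(2*γ*rmax/(1-γ))^2 + 3*γ^2*(V θ s' - V θstar s')^2 + 3*(V θ s - V θstar s)^2 := by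
        nlinarith [hq2,
          sq_nonneg ((rew s + γ * V θstar s' - V θstar s) - γ*(V θ s' - V θstar s')),
          sq_nonneg ((rew s + γ * V θstar s' - V θstar s) + (V θ s - V θstar s)),
          sq_nonneg (γ*(V θ s' - V θstar s') + (V θ s - V θstar s))]
      calc (rew s + γ * V θ s' - V θ s)^2 * ‖gradV θ s‖^2
          ≤ (rew s + γ * V θ s' - V θ s)^2 * l^2 :=
            mul_le_mul_of_nonneg_left hgsq (sq_nonneg _)
        _ ≤ (3*(2*γ*rmax/(1-γ))^2 + 3*γ^2*(V θ s' - V θstar s')^2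
              + 3*(V θ s - V θstar s)^2) * l^2 :=
            mul_le_mul_of_nonneg_right hδ (sq_nonneg l)
        _ = l^2*(3*(2*γ*rmax/(1-γ))^2) + 3*γ^2*l^2*(V θ s' - V θstar s')^2
              + 3*l^2*(V θ s - V θstar s)^2 := by ring
    calc ∑ s, μ s * ∑ s', P s s' * ((rew s + γ * V θ s' - V θ s)^2 * ‖gradV θ s‖^2)
        ≤ ∑ s, μ s * ∑ s', P s s' * (l^2*(3*(2*γ*rmax/(1-γ))^2)
            + 3*γ^2*l^2*(V θ s' - V θstar s')^2 + 3*l^2*(V θ s - V θstar s)^2) := by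
          refine Finset.sum_le_sum fun s _ => ?_
          exact mul_le_mul_of_nonneg_left (Finset.sum_le_sum fun s' _ => hpt s s') (hμnonneg s)
      _ = ∑ s, ((l^2*(3*(2*γ*rmax/(1-γ))^2) + 3*l^2*(V θ s - V θstar s)^2) * μ s
            + 3*γ^2*l^2*(μ s * ∑ s', P s s' * (V θ s' - V θstar s')^2)) := by
          refine Finset.sum_congr rfl fun s _ => ?_
          have hin : ∑ s', P s s' * (l^2*(3*(2*γ*rmax/(1-γ))^2)
              + 3*γ^2*l^2*(V θ s' - V θstar s')^2 + 3*l^2*(V θ s - V θstar s)^2)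
              = (∑ s', P s s') * (l^2*(3*(2*γ*rmax/(1-γ))^2) + 3*l^2*(V θ s - V θstar s)^2)
                + 3*γ^2*l^2 * ∑ s', P s s' * (V θ s' - V θstar s')^2 := by
            calc ∑ s', P s s' * (l^2*(3*(2*γ*rmax/(1-γ))^2)
                + 3*γ^2*l^2*(V θ s' - V θstar s')^2 + 3*l^2*(V θ s - V θstar s)^2)
                = ∑ s', (P s s' * (l^2*(3*(2*γ*rmax/(1-γ))^2) + 3*l^2*(V θ s - V θstar s)^2)
                    + 3*γ^2*l^2 * (P s s' * (V θ s' - V θstar s')^2)) :=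
                  Finset.sum_congr rfl fun s' _ => by ring
              _ = _ := by rw [Finset.sum_add_distrib, ← Finset.sum_mul, ← Finset.mul_sum]
          rw [hin, hProw s]
          ring
      _ = (∑ s, μ s) * (l^2*(3*(2*γ*rmax/(1-γ))^2))
            + 3*l^2*(∑ s, μ s * (V θ s - V θstar s)^2)
            + 3*γ^2*l^2*(∑ s, μ s * ∑ s', P s s' * (V θ s' - V θstar s')^2) := by
          rw [Finset.sum_add_distrib]
          have h5 : ∑ x, (l^2*(3*(2*γ*rmax/(1-γ))^2) + 3*l^2*(V θ x - V θstar x)^2) * μ x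
              = (∑ s, μ s) * (l^2*(3*(2*γ*rmax/(1-γ))^2))
                + 3*l^2*(∑ s, μ s * (V θ s - V θstar s)^2) := by
            calc ∑ x, (l^2*(3*(2*γ*rmax/(1-γ))^2) + 3*l^2*(V θ x - V θstar x)^2) * μ x
                = ∑ x, ((l^2*(3*(2*γ*rmax/(1-γ))^2)) * μ x
                    + 3*l^2*(μ x * (V θ x - V θstar x)^2)) :=
                  Finset.sum_congr rfl fun x _ => by ring
              _ = _ := by
                  rw [Finset.sum_add_distrib, ← Finset.mul_sum, ← Finset.mul_sum]
                  ring
          rw [h5, ← Finset.mul_sum]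
      _ = l^2*(3*(2*γ*rmax/(1-γ))^2)
            + 3*γ^2*l^2*(∑ s, μ s * (V θ s - V θstar s)^2)
            + 3*l^2*(∑ s, μ s * (V θ s - V θstar s)^2) := by
          rw [hμsum, hswap (fun t => (V θ t - V θstar t)^2)]
          ring
  -- fderiv identification
  have hfd := aux_hasfderiv σ hσdiff b emb V hV gradV hgradV θstar
  have hfap : ∀ (x : EuclideanSpace ℝ (Fin m × Fin d)) (s : S),
      fderiv ℝ V θstar x s = (inner ℝ (gradV θstar s) x : ℝ) := by
    intro x s
    rw [hfd.fderiv]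
    rfl
  have hσnn : 0 ≤ σs := by
    rw [hσsdef]
    exact Real.iInf_nonneg fun x => div_nonneg (Real.sqrt_nonneg _) (norm_nonneg _)
  have hσkey : σs * n ≤ Real.sqrt (∑ s, μ s * ((inner ℝ (gradV θstar s) (θ - θstar) : ℝ))^2) := by
    by_cases hz : θ - θstar = (0 : EuclideanSpace ℝ (Fin m × Fin d))
    · have hnz : n = 0 := by rw [hndef, hz, norm_zero]
      rw [hnz, mul_zero]
      exact Real.sqrt_nonneg _
    · have hbdd : BddBelow (Set.range fun x : {x : EuclideanSpace ℝ (Fin m × Fin d) // x ≠ 0} =>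
          Real.sqrt (∑ s, μ s * (fderiv ℝ V θstar x.1 s) ^ 2) / ‖x.1‖) := by
        refine ⟨0, ?_⟩
        rintro y ⟨x, rfl⟩
        positivity
      have hle := ciInf_le hbdd
        (⟨θ - θstar, hz⟩ : {x : EuclideanSpace ℝ (Fin m × Fin d) // x ≠ 0})
      rw [← hσsdef] at hle
      have hnpos : (0:ℝ) < ‖θ - θstar‖ := norm_pos_iff.mpr hz
      have hle2 : σs * ‖θ - θstar‖
          ≤ Real.sqrt (∑ s, μ s * (fderiv ℝ V θstar (θ - θstar) s) ^ 2) :=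
        (le_div_iff₀ hnpos).mp hle
      rw [hndef]
      calc σs * ‖θ - θstar‖ ≤ Real.sqrt (∑ s, μ s * (fderiv ℝ V θstar (θ - θstar) s) ^ 2) := hle2
        _ = Real.sqrt (∑ s, μ s * ((inner ℝ (gradV θstar s) (θ - θstar) : ℝ))^2) := by
            congr 1
            exact Finset.sum_congr rfl fun s _ => by rw [hfap]
  have hσln : σs * n ≤ l * n := by
    refine le_trans hσkey ?_
    have hpt : ∀ s, μ s * ((inner ℝ (gradV θstar s) (θ - θstar) : ℝ))^2 ≤ μ s * (l*n)^2 := by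
      intro s
      refine mul_le_mul_of_nonneg_left ?_ (hμnonneg s)
      have h2 : |(inner ℝ (gradV θstar s) (θ - θstar) : ℝ)| ≤ l * n := by
        calc |(inner ℝ (gradV θstar s) (θ - θstar) : ℝ)|
            ≤ ‖gradV θstar s‖ * ‖θ - θstar‖ := abs_real_inner_le_norm _ _
          _ ≤ l * ‖θ - θstar‖ := mul_le_mul_of_nonneg_right (hgnorm θstar s) (norm_nonneg _)
          _ = l * n := by rw [← hndef]
      nlinarith [h2, abs_nonneg (inner ℝ (gradV θstar s) (θ - θstar) : ℝ),
        sq_abs (inner ℝ (gradV θstar s) (θ - θstar) : ℝ), mul_nonneg hl hn0]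
    calc Real.sqrt (∑ s, μ s * ((inner ℝ (gradV θstar s) (θ - θstar) : ℝ))^2)
        ≤ Real.sqrt (∑ s, μ s * (l*n)^2) :=
          Real.sqrt_le_sqrt (Finset.sum_le_sum fun s _ => hpt s)
      _ = Real.sqrt ((l*n)^2) := by rw [← Finset.sum_mul, hμsum, one_mul]
      _ = l * n := Real.sqrt_sq (by positivity)
  have hDD0 : (0:ℝ) ≤ ∑ s, μ s * (V θ s - V θstar s)^2 :=
    Finset.sum_nonneg fun s _ => mul_nonneg (hμnonneg s) (sq_nonneg _)
  have hfs : ∀ s, |(inner ℝ (gradV θstar s) (θ - θstar) : ℝ) - (V θ s - V θstar s)| ≤ κ * n^2 := by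
    intro s
    have h := htayV θ θstar s
    rw [abs_sub_comm] at h
    rw [hndef]
    exact h
  have hsum_inner_le : ∑ s, μ s * ((inner ℝ (gradV θstar s) (θ - θstar) : ℝ))^2
      ≤ (Real.sqrt (∑ s, μ s * (V θ s - V θstar s)^2) + κ * n^2)^2 := by
    have hCS2 : (∑ s, μ s * ((V θ s - V θstar s)
          * ((inner ℝ (gradV θstar s) (θ - θstar) : ℝ) - (V θ s - V θstar s))))^2
        ≤ (∑ s, μ s * (V θ s - V θstar s)^2)
          * (∑ s, μ s * ((inner ℝ (gradV θstar s) (θ - θstar) : ℝ) - (V θ s - V θstar s))^2) := by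
      have h := Finset.sum_mul_sq_le_sq_mul_sq Finset.univ
        (fun s => Real.sqrt (μ s) * (V θ s - V θstar s))
        (fun s => Real.sqrt (μ s)
          * ((inner ℝ (gradV θstar s) (θ - θstar) : ℝ) - (V θ s - V θstar s)))
      have e1 : ∑ s, (Real.sqrt (μ s) * (V θ s - V θstar s))
            * (Real.sqrt (μ s)
              * ((inner ℝ (gradV θstar s) (θ - θstar) : ℝ) - (V θ s - V θstar s)))
          = ∑ s, μ s * ((V θ s - V θstar s)
            * ((inner ℝ (gradV θstar s) (θ - θstar) : ℝ) - (V θ s - V θstar s))) := by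
        refine Finset.sum_congr rfl fun s _ => ?_
        calc (Real.sqrt (μ s) * (V θ s - V θstar s))
              * (Real.sqrt (μ s)
                * ((inner ℝ (gradV θstar s) (θ - θstar) : ℝ) - (V θ s - V θstar s)))
            = (Real.sqrt (μ s) * Real.sqrt (μ s)) * ((V θ s - V θstar s)
              * ((inner ℝ (gradV θstar s) (θ - θstar) : ℝ) - (V θ s - V θstar s))) := by ring
          _ = μ s * ((V θ s - V θstar s)
              * ((inner ℝ (gradV θstar s) (θ - θstar) : ℝ) - (V θ s - V θstar s))) := by
              rw [Real.mul_self_sqrt (hμnonneg s)]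
      have e2 : ∑ s, (Real.sqrt (μ s) * (V θ s - V θstar s))^2
          = ∑ s, μ s * (V θ s - V θstar s)^2 := by
        refine Finset.sum_congr rfl fun s _ => ?_
        rw [mul_pow, Real.sq_sqrt (hμnonneg s)]
      have e3 : ∑ s, (Real.sqrt (μ s)
            * ((inner ℝ (gradV θstar s) (θ - θstar) : ℝ) - (V θ s - V θstar s)))^2
          = ∑ s, μ s * ((inner ℝ (gradV θstar s) (θ - θstar) : ℝ) - (V θ s - V θstar s))^2 := by
        refine Finset.sum_congr rfl fun s _ => ?_
        rw [mul_pow, Real.sq_sqrt (hμnonneg s)]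
      rw [e1, e2, e3] at h
      exact h
    have hf2 : ∑ s, μ s * ((inner ℝ (gradV θstar s) (θ - θstar) : ℝ) - (V θ s - V θstar s))^2
        ≤ (κ*n^2)^2 := by
      calc ∑ s, μ s * ((inner ℝ (gradV θstar s) (θ - θstar) : ℝ) - (V θ s - V θstar s))^2
          ≤ ∑ s, μ s * (κ*n^2)^2 := by
            refine Finset.sum_le_sum fun s _ => ?_
            refine mul_le_mul_of_nonneg_left ?_ (hμnonneg s)
            nlinarith [hfs s,
              abs_nonneg ((inner ℝ (gradV θstar s) (θ - θstar) : ℝ) - (V θ s - V θstar s)),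
              sq_abs ((inner ℝ (gradV θstar s) (θ - θstar) : ℝ) - (V θ s - V θstar s)),
              mul_nonneg hκ (sq_nonneg n)]
        _ = (κ*n^2)^2 := by rw [← Finset.sum_mul, hμsum, one_mul]
    have hexp2 : ∑ s, μ s * ((inner ℝ (gradV θstar s) (θ - θstar) : ℝ))^2
        = (∑ s, μ s * (V θ s - V θstar s)^2)
          + 2 * (∑ s, μ s * ((V θ s - V θstar s)
              * ((inner ℝ (gradV θstar s) (θ - θstar) : ℝ) - (V θ s - V θstar s))))
          + ∑ s, μ s * ((inner ℝ (gradV θstar s) (θ - θstar) : ℝ) - (V θ s - V θstar s))^2 := by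
      rw [Finset.mul_sum, ← Finset.sum_add_distrib, ← Finset.sum_add_distrib]
      exact Finset.sum_congr rfl fun s _ => by ring
    have hf2' : 0 ≤ ∑ s, μ s * ((inner ℝ (gradV θstar s) (θ - θstar) : ℝ)
        - (V θ s - V θstar s))^2 :=
      Finset.sum_nonneg fun s _ => mul_nonneg (hμnonneg s) (sq_nonneg _)
    have hR := Real.sq_sqrt hDD0
    have hR0 := Real.sqrt_nonneg (∑ s, μ s * (V θ s - V θstar s)^2)
    have hKnn : (0:ℝ) ≤ κ*n^2 := by positivity
    have hcross : ∑ s, μ s * ((V θ s - V θstar s)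
          * ((inner ℝ (gradV θstar s) (θ - θstar) : ℝ) - (V θ s - V θstar s)))
        ≤ Real.sqrt (∑ s, μ s * (V θ s - V θstar s)^2) * (κ*n^2) := by
      nlinarith [hCS2, hf2, hR, hR0, hKnn, hDD0,
        mul_nonneg hR0 hKnn]
    nlinarith [hexp2, hcross, hf2, hR]
  have hDDlow : σs^2*n^2 - 2*σs*κ*n^3
      ≤ ∑ s, μ s * (V θ s - V θstar s)^2 := by
    have h1 : σs*n ≤ Real.sqrt (∑ s, μ s * (V θ s - V θstar s)^2) + κ*n^2 := by
      refine le_trans hσkey ?_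
      calc Real.sqrt (∑ s, μ s * ((inner ℝ (gradV θstar s) (θ - θstar) : ℝ))^2)
          ≤ Real.sqrt ((Real.sqrt (∑ s, μ s * (V θ s - V θstar s)^2) + κ*n^2)^2) :=
            Real.sqrt_le_sqrt hsum_inner_le
        _ = Real.sqrt (∑ s, μ s * (V θ s - V θstar s)^2) + κ*n^2 :=
            Real.sqrt_sq (by positivity)
    have h3 := Real.sq_sqrt hDD0
    have h4 := Real.sqrt_nonneg (∑ s, μ s * (V θ s - V θstar s)^2)
    rcases le_or_gt (σs*n) (κ*n^2) with hc | hc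
    · nlinarith [mul_nonneg hσnn hn0, hc, hDD0]
    · have h5 : (0:ℝ) ≤ σs*n - κ*n^2 := by linarith
      have h6 : σs*n - κ*n^2 ≤ Real.sqrt (∑ s, μ s * (V θ s - V θstar s)^2) := by linarith
      have p1 : (σs*n - κ*n^2)^2 ≤ (Real.sqrt (∑ s, μ s * (V θ s - V θstar s)^2))^2 :=
        pow_le_pow_left₀ h5 h6 2
      nlinarith [p1, h3, sq_nonneg (κ*n^2)]
  -- final assembly
  rw [hsum]
  have hBeq : α^2 * (l^2*(3*(2*γ*rmax/(1-γ))^2)) = 12*α^2*γ^2*l^2*rmax^2/(1-γ)^2 := by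
    rw [div_pow, mul_pow, mul_pow]
    field_simp
    ring
  have hceq : 4*α*(1+γ)*c0*l*(Real.sqrt m)⁻¹*n^3 = 8*α*(1+γ)*l*κ*n^3 := by
    rw [hκdef]
    field_simp
    ring
  have e1 : (2*α*(1-γ))*(σs^2*n^2 - 2*σs*κ*n^3)
      ≤ (2*α*(1-γ))*(∑ s, μ s * (V θ s - V θstar s)^2) :=
    mul_le_mul_of_nonneg_left hDDlow (by positivity)
  have e2 : (3*α^2*(1+γ^2)*l^2)*(∑ s, μ s * (V θ s - V θstar s)^2)
      ≤ (3*α^2*(1+γ^2)*l^2)*(l^2*n^2) :=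
    mul_le_mul_of_nonneg_left hDD2 (by positivity)
  have e3 : (4*α*(1-γ)*κ*n^2)*(σs*n) ≤ (4*α*(1-γ)*κ*n^2)*(l*n) :=
    mul_le_mul_of_nonneg_left hσln (by positivity)
  have e4 : 2*α*((1+γ)*l*κ*n^3) + 4*α*(1-γ)*(κ*n^2)*(l*n) ≤ 8*α*(1+γ)*l*κ*n^3 := by
    have base : (0:ℝ) ≤ α*l*κ*n^3 := by positivity
    nlinarith [base, mul_nonneg hγ0.le base]
  have eT2 := mul_le_mul_of_nonneg_left hT2 (by positivity : (0:ℝ) ≤ 2*α)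
  have eT3 := mul_le_mul_of_nonneg_left hT3 (by positivity : (0:ℝ) ≤ α^2)
  rw [← hndef]
  calc n^2
        + 2*α*(∑ s, μ s * ((inner ℝ (θ - θstar) (gradV θ s) : ℝ)
            * (γ * (∑ s', P s s' * (V θ s' - V θstar s')) - (V θ s - V θstar s))))
        + α^2 * ∑ s, μ s * ∑ s', P s s' *
            ((rew s + γ * V θ s' - V θ s)^2 * ‖gradV θ s‖^2)
      ≤ n^2 + 2*α*(-((1-γ) * ∑ s, μ s * (V θ s - V θstar s)^2) + (1+γ)*l*κ*n^3)
        + α^2*(l^2*(3*(2*γ*rmax/(1-γ))^2)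
            + 3*γ^2*l^2*(∑ s, μ s * (V θ s - V θstar s)^2)
            + 3*l^2*(∑ s, μ s * (V θ s - V θstar s)^2)) := by
        linarith [eT2, eT3]
    _ ≤ n^2 - (2*α*(1-γ))*(σs^2*n^2 - 2*σs*κ*n^3) + 2*α*((1+γ)*l*κ*n^3)
        + α^2*(l^2*(3*(2*γ*rmax/(1-γ))^2))
        + (3*α^2*(1+γ^2)*l^2)*(∑ s, μ s * (V θ s - V θstar s)^2) := by
        linarith [e1]
    _ ≤ n^2 - 2*α*(1-γ)*σs^2*n^2 + (4*α*(1-γ)*κ*n^2)*(l*n) + 2*α*((1+γ)*l*κ*n^3)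
        + α^2*(l^2*(3*(2*γ*rmax/(1-γ))^2)) + (3*α^2*(1+γ^2)*l^2)*(l^2*n^2) := by
        linarith [e2, e3]
    _ ≤ n^2 - 2*α*(1-γ)*σs^2*n^2 + 8*α*(1+γ)*l*κ*n^3
        + α^2*(l^2*(3*(2*γ*rmax/(1-γ))^2)) + 3*α^2*(1+γ^2)*l^4*n^2 := by
        linarith [e4]
    _ = (1 - 2 * α * (1 - γ) * σs ^ 2 + 3 * α ^ 2 * (1 + γ ^ 2) * l ^ 4) * n ^ 2
        + 4 * α * (1 + γ) * c0 * l * (Real.sqrt m)⁻¹ * n ^ 3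
        + 12 * α ^ 2 * γ ^ 2 * l ^ 2 * rmax ^ 2 / (1 - γ) ^ 2 := by
        rw [hceq]
        linear_combination hBeq
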